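/- arXiv:1905.08480 — 5 statements merged into one kernel-verified Lean document; each statement's English description precedes it below -/
import Mathlib

section
/- For every real number E ≥ 0 and κ ≥ 1, the function ψ_{E,κ}(η) = g(κE + κ − ηE − 1) − g((1−η)E) is convex on the interval [0,1], where g(x) = (x+1)ln(x+1) − x ln x for x > 0 and g(0) = 0. -/
/-- The entropy function `g(x) = (x+1)·ln(x+1) − x·ln x` (with `g(0) = 0`,
automatic since `Real.log 0 = 0`). -/
noncomputable def g (x : ℝ) : ℝ := (x + 1) * Real.log (x + 1) - x * Real.log x

lemma g_continuous : Continuous g := by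
  unfold g
  exact (Real.continuous_mul_log.comp (continuous_id.add continuous_const)).sub
    Real.continuous_mul_log

lemma g_hasDerivAt {x : ℝ} (hx : 0 < x) :
    HasDerivAt g (Real.log (x + 1) - Real.log x) x := by
  have h1 : HasDerivAt (fun y : ℝ => (y + 1) * Real.log (y + 1))
      ((Real.log (x + 1) + 1) * 1) x := by
    have := (Real.hasDerivAt_mul_log (x := x + 1) (by positivity)).comp x
      ((hasDerivAt_id x).add_const 1)
    exact this
  have h2 : HasDerivAt (fun y : ℝ => y * Real.log y) (Real.log x + 1) x :=
    Real.hasDerivAt_mul_log hx.ne'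
  have := h1.sub h2
  refine (this : HasDerivAt g _ x).congr_deriv ?_
  ring

/-- for `E ≥ 0` and `κ ≥ 1`, the function
`ψ_{E,κ}(η) = g(κE + κ − ηE − 1) − g((1−η)E)` is convex on `[0,1]`. -/
theorem psi_convexOn (E κ : ℝ) (hE : 0 ≤ E) (hκ : 1 ≤ κ) :
    ConvexOn ℝ (Set.Icc (0 : ℝ) 1)
      (fun η : ℝ => g (κ * E + κ - η * E - 1) - g ((1 - η) * E)) := by
  rcases eq_or_lt_of_le hE with hE0 | hEpos
  · have : (fun η : ℝ => g (κ * E + κ - η * E - 1) - g ((1 - η) * E))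
        = fun _ : ℝ => g (κ - 1) - g 0 := by
      funext η
      rw [← hE0]
      norm_num
    rw [this]
    exact convexOn_const _ (convex_Icc 0 1)
  -- E > 0 case
  have hint : interior (Set.Icc (0:ℝ) 1) = Set.Ioo 0 1 := interior_Icc
  refine convexOn_of_hasDerivWithinAt2_nonneg (convex_Icc 0 1)
    (f' := fun η => (Real.log (κ * E + κ - η * E - 1 + 1) -
        Real.log (κ * E + κ - η * E - 1)) * (-E) -
        (Real.log ((1 - η) * E + 1) - Real.log ((1 - η) * E)) * (-E))
    (f'' := fun η => (1 / (κ * E + κ - η * E - 1 + 1) * (-E) -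
        1 / (κ * E + κ - η * E - 1) * (-E)) * (-E) -
        (1 / ((1 - η) * E + 1) * (-E) - 1 / ((1 - η) * E) * (-E)) * (-E))
    ?_ ?_ ?_ ?_
  · exact ((g_continuous.comp (by continuity)).sub (g_continuous.comp (by continuity))).continuousOn
  all_goals intro η hη; rw [hint] at hη
  · -- first derivative
    have hx2 : 0 < (1 - η) * E := by
      have := hη.2; have := hη.1; nlinarith
    have hx1 : 0 < κ * E + κ - η * E - 1 := by nlinarith [hη.1, hη.2]
    have hd1 : HasDerivAt (fun η : ℝ => κ * E + κ - η * E - 1) (-E) η := by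
      simpa using (((hasDerivAt_id η).mul_const E).const_sub (κ * E + κ)).sub_const 1
    have hd2 : HasDerivAt (fun η : ℝ => (1 - η) * E) (-E) η := by
      simpa using (((hasDerivAt_id η).const_sub 1)).mul_const E
    exact (((g_hasDerivAt hx1).comp η hd1).sub
      ((g_hasDerivAt hx2).comp η hd2)).hasDerivWithinAt
  · -- second derivative
    have hx2 : 0 < (1 - η) * E := by nlinarith [hη.1, hη.2]
    have hx1 : 0 < κ * E + κ - η * E - 1 := by nlinarith [hη.1, hη.2]
    have hd1 : HasDerivAt (fun η : ℝ => κ * E + κ - η * E - 1) (-E) η := by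
      simpa using (((hasDerivAt_id η).mul_const E).const_sub (κ * E + κ)).sub_const 1
    have hd2 : HasDerivAt (fun η : ℝ => (1 - η) * E) (-E) η := by
      simpa using (((hasDerivAt_id η).const_sub 1)).mul_const E
    have hl1 : HasDerivAt (fun η : ℝ => Real.log (κ * E + κ - η * E - 1 + 1))
        (1 / (κ * E + κ - η * E - 1 + 1) * (-E)) η := by
      have := (Real.hasDerivAt_log (by positivity : κ * E + κ - η * E - 1 + 1 ≠ 0)).comp η
        (hd1.add_const 1)
      simpa [one_div, Function.comp_def] using this
    have hl2 : HasDerivAt (fun η : ℝ => Real.log (κ * E + κ - η * E - 1))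
        (1 / (κ * E + κ - η * E - 1) * (-E)) η := by
      have := (Real.hasDerivAt_log hx1.ne').comp η hd1
      simpa [one_div, Function.comp_def] using this
    have hl3 : HasDerivAt (fun η : ℝ => Real.log ((1 - η) * E + 1))
        (1 / ((1 - η) * E + 1) * (-E)) η := by
      have := (Real.hasDerivAt_log (by positivity : (1 - η) * E + 1 ≠ 0)).comp η
        (hd2.add_const 1)
      simpa [one_div, Function.comp_def] using this
    have hl4 : HasDerivAt (fun η : ℝ => Real.log ((1 - η) * E))
        (1 / ((1 - η) * E) * (-E)) η := by
      have := (Real.hasDerivAt_log hx2.ne').comp η hd2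
      simpa [one_div, Function.comp_def] using this
    exact (((hl1.sub hl2).mul_const (-E)).sub ((hl3.sub hl4).mul_const (-E))).hasDerivWithinAt
  · -- nonnegativity of second derivative
    set x1 := κ * E + κ - η * E - 1 with hx1def
    set x2 := (1 - η) * E with hx2def
    have hx2 : 0 < x2 := by rw [hx2def]; nlinarith [hη.1, hη.2]
    have hx1 : 0 < x1 := by rw [hx1def]; nlinarith [hη.1, hη.2]
    have hle : x2 ≤ x1 := by rw [hx1def, hx2def]; nlinarith
    have e1 : 1 / x2 - 1 / x1 = (x1 - x2) / (x2 * x1) := by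
      field_simp
    have e2 : 1 / (x2 + 1) - 1 / (x1 + 1) = (x1 - x2) / ((x2 + 1) * (x1 + 1)) := by
      field_simp
      ring
    have hdd : (x1 - x2) / ((x2 + 1) * (x1 + 1)) ≤ (x1 - x2) / (x2 * x1) :=
      div_le_div_of_nonneg_left (by linarith) (by positivity) (by nlinarith)
    have hmain : 1 / (x2 + 1) - 1 / (x1 + 1) ≤ 1 / x2 - 1 / x1 := by
      rw [e1, e2]; exact hdd
    have key : (1 / (x1 + 1) * (-E) - 1 / x1 * (-E)) * (-E) -
        (1 / (x2 + 1) * (-E) - 1 / x2 * (-E)) * (-E)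
        = E ^ 2 * ((1 / x2 - 1 / x1) - (1 / (x2 + 1) - 1 / (x1 + 1))) := by ring
    rw [key]
    have h0 : (0:ℝ) ≤ (1 / x2 - 1 / x1) - (1 / (x2 + 1) - 1 / (x1 + 1)) := by linarith
    positivity
end

section
/- For every real number E ≥ 0 and κ ≥ 1, the second derivative of ψ_{E,κ}(η) = g(κE + κ − ηE − 1) − g((1−η)E) at any η ∈ (0,1) with (κ−η)E + κ − 1 > 0 equals E(E+1)(κ−1)((κ+1−2η)E+κ) divided by (1−η)((κ−η)E+κ−1)((κ−η)E+κ)((1−η)E+1), which is nonnegative. -/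
set_option maxHeartbeats 1000000


/-- the second derivative of `ψ_{E,κ}` at `η ∈ (0,1)` with
`(κ−η)E + κ − 1 > 0` equals the stated explicit formula, which is nonnegative. -/
theorem psi_second_deriv (E κ : ℝ) (hE : 0 ≤ E) (hκ : 1 ≤ κ) (η : ℝ)
    (hη : η ∈ Set.Ioo (0 : ℝ) 1) (hpos : 0 < (κ - η) * E + κ - 1) :
    deriv (deriv (fun η : ℝ => g ((κ - η) * E + κ - 1) - g ((1 - η) * E))) η =
      E * (E + 1) * (κ - 1) * ((κ + 1 - 2 * η) * E + κ) /
        ((1 - η) * ((κ - η) * E + κ - 1) * ((κ - η) * E + κ) * ((1 - η) * E + 1)) ∧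
    0 ≤ E * (E + 1) * (κ - 1) * ((κ + 1 - 2 * η) * E + κ) /
        ((1 - η) * ((κ - η) * E + κ - 1) * ((κ - η) * E + κ) * ((1 - η) * E + 1)) := by
  obtain ⟨hη0, hη1⟩ := hη
  rcases eq_or_lt_of_le hE with hE0 | hEpos
  · -- E = 0 : constant function
    subst hE0
    constructor
    · simp [deriv_const]
    · simp
  · -- E > 0
    set U : Set ℝ := {x | x < 1 ∧ 0 < (κ - x) * E + κ - 1} with hU
    have hUopen : IsOpen U := by
      have : U = (fun x : ℝ => x) ⁻¹' (Set.Iio 1) ∩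
          (fun x : ℝ => (κ - x) * E + κ - 1) ⁻¹' (Set.Ioi 0) := by
        ext x; simp [hU, Set.mem_setOf_eq]
      rw [this]
      exact (isOpen_Iio.preimage continuous_id).inter
        (isOpen_Ioi.preimage (by continuity))
    have hηU : η ∈ U := ⟨hη1, hpos⟩
    -- first derivative on U
    have haff : ∀ x : ℝ, HasDerivAt (fun η' : ℝ => (κ - η') * E + κ - 1) (-E) x := by
      intro x
      have := ((((hasDerivAt_id x).const_sub κ).mul_const E).add_const κ).sub_const 1
      refine this.congr_deriv ?_; ring
    have haff1 : ∀ x : ℝ, HasDerivAt (fun η' : ℝ => (κ - η') * E + κ) (-E) x := by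
      intro x
      have := (((hasDerivAt_id x).const_sub κ).mul_const E).add_const κ
      refine this.congr_deriv ?_; ring
    have hbff : ∀ x : ℝ, HasDerivAt (fun η' : ℝ => (1 - η') * E) (-E) x := by
      intro x
      have := ((hasDerivAt_id x).const_sub 1).mul_const E
      refine this.congr_deriv ?_; ring
    have hbff1 : ∀ x : ℝ, HasDerivAt (fun η' : ℝ => (1 - η') * E + 1) (-E) x := by
      intro x
      exact (hbff x).add_const 1
    set φ : ℝ → ℝ := fun η' =>
      (Real.log ((κ - η') * E + κ - 1 + 1) - Real.log ((κ - η') * E + κ - 1)) * (-E)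
      - (Real.log ((1 - η') * E + 1) - Real.log ((1 - η') * E)) * (-E) with hφ
    have hderiv : ∀ x ∈ U, HasDerivAt
        (fun η' : ℝ => g ((κ - η') * E + κ - 1) - g ((1 - η') * E)) (φ x) x := by
      intro x hx
      obtain ⟨hx1, hxa⟩ := hx
      have hxb : 0 < (1 - x) * E := mul_pos (by linarith) hEpos
      exact ((g_hasDerivAt hxa).comp x (haff x)).sub ((g_hasDerivAt hxb).comp x (hbff x))
    have hEq : deriv (fun η' : ℝ => g ((κ - η') * E + κ - 1) - g ((1 - η') * E)) =ᶠ[nhds η] φ := by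
      filter_upwards [hUopen.mem_nhds hηU] with x hx
      exact (hderiv x hx).deriv
    rw [hEq.deriv_eq]
    -- now compute deriv φ η
    have hA1 : (0:ℝ) < (κ - η) * E + κ - 1 + 1 := by linarith
    have hB : (0:ℝ) < (1 - η) * E := mul_pos (by linarith) hEpos
    have hB1 : (0:ℝ) < (1 - η) * E + 1 := by linarith
    have l1 : HasDerivAt (fun η' : ℝ => Real.log ((κ - η') * E + κ - 1 + 1))
        (((κ - η) * E + κ - 1 + 1)⁻¹ * (-E)) η := by
      exact (Real.hasDerivAt_log (by linarith)).comp η ((haff η).add_const 1)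
    have l2 : HasDerivAt (fun η' : ℝ => Real.log ((κ - η') * E + κ - 1))
        (((κ - η) * E + κ - 1)⁻¹ * (-E)) η :=
      by exact (Real.hasDerivAt_log hpos.ne').comp η (haff η)
    have l3 : HasDerivAt (fun η' : ℝ => Real.log ((1 - η') * E + 1))
        (((1 - η) * E + 1)⁻¹ * (-E)) η :=
      by exact (Real.hasDerivAt_log hB1.ne').comp η (hbff1 η)
    have l4 : HasDerivAt (fun η' : ℝ => Real.log ((1 - η') * E))
        (((1 - η) * E)⁻¹ * (-E)) η :=
      by exact (Real.hasDerivAt_log hB.ne').comp η (hbff η)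
    have hφd : HasDerivAt φ
        ((((κ - η) * E + κ - 1 + 1)⁻¹ * (-E) - ((κ - η) * E + κ - 1)⁻¹ * (-E)) * (-E)
          - ((((1 - η) * E + 1)⁻¹ * (-E)) - (((1 - η) * E)⁻¹ * (-E))) * (-E)) η :=
      ((l1.sub l2).mul_const (-E)).sub ((l3.sub l4).mul_const (-E))
    rw [hφd.deriv]
    have h1η : (0:ℝ) < 1 - η := by linarith
    have hnum : (0:ℝ) ≤ E * (E + 1) * (κ - 1) * ((κ + 1 - 2 * η) * E + κ) := by
      have : (0:ℝ) < (κ + 1 - 2 * η) * E + κ := by nlinarith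
      have hκ1 : (0:ℝ) ≤ κ - 1 := by linarith
      positivity
    have hden : (0:ℝ) < (1 - η) * ((κ - η) * E + κ - 1) * ((κ - η) * E + κ) * ((1 - η) * E + 1) := by
      have : (0:ℝ) < (κ - η) * E + κ := by linarith
      positivity
    have hAne : ((κ - η) * E + κ - 1) ≠ 0 := hpos.ne'
    have hA1ne : ((κ - η) * E + κ - 1 + 1) ≠ 0 := hA1.ne'
    have hBne : ((1 - η) * E) ≠ 0 := hB.ne'
    have hB1ne : ((1 - η) * E + 1) ≠ 0 := hB1.ne'
    have h1ηne : (1 - η) ≠ 0 := h1η.ne'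
    have hA1ne' : ((κ - η) * E + κ) ≠ 0 := by intro h; rw [show (κ - η) * E + κ - 1 + 1 = (κ - η) * E + κ by ring] at hA1ne; exact hA1ne h
    constructor
    · rw [show (κ - η) * E + κ - 1 + 1 = (κ - η) * E + κ by ring]
      rw [eq_div_iff hden.ne']
      field_simp
      ring
    · exact div_nonneg hnum hden.le
end

section
/- For every κ ≥ 1 and E ≥ 0, ψ_{E,κ}(1/2) ≤ (ψ_{E,κ}(η) + ψ_{E,κ}(1−η))/2 for all η ∈ [0,1], where ψ_{E,κ}(η) = g((κ−η)E + κ − 1) − g((1−η)E). -/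
noncomputable def ψ (E κ η : ℝ) : ℝ := g ((κ - η) * E + κ - 1) - g ((1 - η) * E)

lemma log_shift_hasDerivAt {x a : ℝ} (h : x + a ≠ 0) :
    HasDerivAt (fun y : ℝ => Real.log (y + a)) (x + a)⁻¹ x := by
  have := (Real.hasDerivAt_log h).comp x ((hasDerivAt_id x).add_const a)
  simpa [Function.comp_def] using this

lemma phi_convexOn {c : ℝ} (hc : 0 ≤ c) :
    ConvexOn ℝ (Set.Ici 0) (fun u => g (u + c) - g u) := by
  set φ : ℝ → ℝ := fun u => g (u + c) - g u with hφ
  set f' : ℝ → ℝ := fun u =>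
    (Real.log (u + c + 1) - Real.log (u + c)) - (Real.log (u + 1) - Real.log u) with hf'
  have hφ' : ∀ u ∈ Set.Ioi (0 : ℝ), HasDerivAt φ (f' u) u := by
    intro u hu
    have hu0 : (0 : ℝ) < u := hu
    have huc : (0 : ℝ) < u + c := by linarith
    have h1 : HasDerivAt (fun y : ℝ => g (y + c))
        (Real.log (u + c + 1) - Real.log (u + c)) u := by
      have := (g_hasDerivAt huc).comp u ((hasDerivAt_id u).add_const c)
      simpa [Function.comp_def] using this
    exact (h1.sub (g_hasDerivAt hu0))
  have hderiv_eq : Set.EqOn (deriv φ) f' (Set.Ioi 0) := fun u hu => (hφ' u hu).deriv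
  have hφ'' : ∀ u ∈ Set.Ioi (0 : ℝ), HasDerivAt (deriv φ)
      (((u + c + 1)⁻¹ - (u + c)⁻¹) - ((u + 1)⁻¹ - u⁻¹)) u := by
    intro u hu
    have hu0 : (0 : ℝ) < u := hu
    have h1 : HasDerivAt f' (((u + c + 1)⁻¹ - (u + c)⁻¹) - ((u + 1)⁻¹ - u⁻¹)) u := by
      have a1 := log_shift_hasDerivAt (x := u) (a := c + 1) (by positivity)
      have a2 := log_shift_hasDerivAt (x := u) (a := c) (by positivity)
      have a3 := log_shift_hasDerivAt (x := u) (a := 1) (by positivity)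
      have a4 := log_shift_hasDerivAt (x := u) (a := 0) (by positivity)
      have := ((a1.sub a2).sub (a3.sub a4))
      simp only [add_zero] at this
      simp only [← add_assoc] at this
      exact this
    apply h1.congr_of_eventuallyEq
    filter_upwards [IsOpen.mem_nhds isOpen_Ioi hu] with v hv
    exact hderiv_eq hv
  refine convexOn_of_deriv2_nonneg (convex_Ici 0) ?_ ?_ ?_ ?_
  · exact ((g_continuous.comp (continuous_id.add continuous_const)).sub g_continuous).continuousOn
  · rw [interior_Ici]
    exact fun u hu => (hφ' u hu).differentiableAt.differentiableWithinAt
  · rw [interior_Ici]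
    exact fun u hu => (hφ'' u hu).differentiableAt.differentiableWithinAt
  · rw [interior_Ici]
    intro u hu
    have hu0 : (0 : ℝ) < u := hu
    have hd2 : deriv^[2] φ u = ((u + c + 1)⁻¹ - (u + c)⁻¹) - ((u + 1)⁻¹ - u⁻¹) := by
      simp only [Function.iterate_succ, Function.iterate_zero, Function.comp_apply, id_eq]
      exact (hφ'' u hu).deriv
    rw [hd2]
    have h1 : u⁻¹ - (u + c)⁻¹ = c / (u * (u + c)) := by
      field_simp
      ring
    have h2 : (u + 1)⁻¹ - (u + c + 1)⁻¹ = c / ((u + 1) * (u + c + 1)) := by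
      field_simp
      ring
    have h3 : c / ((u + 1) * (u + c + 1)) ≤ c / (u * (u + c)) := by
      apply div_le_div_of_nonneg_left hc (by positivity)
      nlinarith
    linarith [h1, h2, h3]

/-- for `κ ≥ 1`, `E ≥ 0` and `η ∈ [0,1]`,
`ψ_{E,κ}(1/2) ≤ (ψ_{E,κ}(η) + ψ_{E,κ}(1−η))/2`. -/
theorem psi_half_min (E κ : ℝ) (hE : 0 ≤ E) (hκ : 1 ≤ κ)
    (η : ℝ) (hη : η ∈ Set.Icc (0 : ℝ) 1) :
    ψ E κ (1 / 2) ≤ (ψ E κ η + ψ E κ (1 - η)) / 2 := by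
  obtain ⟨hη0, hη1⟩ := hη
  set c : ℝ := (κ - 1) * (E + 1) with hc_def
  have hc : 0 ≤ c := mul_nonneg (by linarith) (by linarith)
  set φ : ℝ → ℝ := fun u => g (u + c) - g u with hφ
  have hψ : ∀ η' : ℝ, ψ E κ η' = φ ((1 - η') * E) := by
    intro η'
    have harg : (1 - η') * E + c = (κ - η') * E + κ - 1 := by rw [hc_def]; ring
    simp only [ψ, hφ, harg]
  have hconv := phi_convexOn hc
  have hx : (1 - η) * E ∈ Set.Ici (0 : ℝ) := mul_nonneg (by linarith) hE
  have hy : η * E ∈ Set.Ici (0 : ℝ) := mul_nonneg hη0 hE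
  have := hconv.2 hx hy (by norm_num : (0:ℝ) ≤ 1/2) (by norm_num : (0:ℝ) ≤ 1/2)
    (by norm_num)
  have hmid : (1/2 : ℝ) • ((1 - η) * E) + (1/2 : ℝ) • (η * E) = (1 - 1/2) * E := by
    simp only [smul_eq_mul]; ring
  rw [hmid] at this
  rw [hψ (1/2), hψ η, hψ (1 - η)]
  have h1η : (1 - (1 - η)) * E = η * E := by ring
  rw [h1η]
  calc φ ((1 - 1/2) * E) ≤ (1/2 : ℝ) • φ ((1 - η) * E) + (1/2 : ℝ) • φ (η * E) := this
    _ = (φ ((1 - η) * E) + φ (η * E)) / 2 := by simp [smul_eq_mul]; ring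
end

section
/- For every κ ≥ 1 and E ≥ 0, the quantity f(κ,E) = g((κ − 1/2)E + κ − 1) − g(E/2) − ln(2κ − 1) satisfies 0 ≤ f(κ,E) ≤ ln(e/2) = 1 − ln 2. -/
open Real Set Filter Topology

/-- auxiliary: `φ x = g x − log(2x+1)`. -/
noncomputable def gapPhi (x : ℝ) : ℝ := g x - Real.log (2 * x + 1)

/-- auxiliary: `q` is the derivative of `gapPhi` on `(0,∞)`. -/
noncomputable def gapQ (x : ℝ) : ℝ :=
  Real.log (x + 1) - Real.log x - 2 * (2 * x + 1)⁻¹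

lemma tendsto_const_add_inv (c : ℝ) :
    Tendsto (fun x : ℝ => c + x⁻¹) atTop (𝓝 c) := by
  have h : Tendsto (fun x : ℝ => c + x⁻¹) atTop (𝓝 (c + 0)) :=
    tendsto_const_nhds.add tendsto_inv_atTop_zero
  simpa using h

lemma hasDerivAt_lin (x : ℝ) : HasDerivAt (fun y : ℝ => 2 * y + 1) 2 x := by
  simpa using ((hasDerivAt_id x).const_mul 2).add_const 1

lemma gapQ_hasDerivAt {x : ℝ} (hx : 0 < x) :
    HasDerivAt gapQ (-(x * (x + 1) * (2 * x + 1) ^ 2)⁻¹) x := by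
  have hx1 : x + 1 ≠ 0 := by linarith
  have hx2 : 2 * x + 1 ≠ 0 := by linarith
  have h1 : HasDerivAt (fun y : ℝ => Real.log (y + 1)) (x + 1)⁻¹ x := by
    simpa [Function.comp_def] using (Real.hasDerivAt_log hx1).comp x ((hasDerivAt_id x).add_const 1)
  have h2 : HasDerivAt Real.log x⁻¹ x := Real.hasDerivAt_log hx.ne'
  have h3 : HasDerivAt (fun y : ℝ => 2 * (2 * y + 1)⁻¹)
      (2 * (-2 / (2 * x + 1) ^ 2)) x :=
    ((hasDerivAt_lin x).inv hx2).const_mul 2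
  have h : HasDerivAt gapQ _ x := (h1.sub h2).sub h3
  convert h using 1
  have hprod : x * (x + 1) * (2 * x + 1) ^ 2 ≠ 0 := by positivity
  field_simp
  ring

lemma gapQ_anti : AntitoneOn gapQ (Ioi (0 : ℝ)) := by
  have hdiff : ∀ x ∈ interior (Ioi (0 : ℝ)), DifferentiableAt ℝ gapQ x := by
    intro x hx
    rw [interior_Ioi] at hx
    exact (gapQ_hasDerivAt hx).differentiableAt
  apply antitoneOn_of_deriv_nonpos (convex_Ioi 0)
  · intro x hx
    exact ((hdiff x (by rwa [interior_Ioi])).continuousAt).continuousWithinAt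
  · exact fun x hx => (hdiff x hx).differentiableWithinAt
  · intro x hx
    rw [interior_Ioi] at hx
    have hx0 : 0 < x := hx
    rw [(gapQ_hasDerivAt hx).deriv, neg_nonpos]
    have : (0:ℝ) < x * (x + 1) * (2 * x + 1) ^ 2 :=
      mul_pos (mul_pos hx0 (by linarith)) (pow_pos (by linarith) 2)
    exact inv_nonneg.mpr this.le

lemma gapQ_tendsto : Tendsto gapQ atTop (𝓝 0) := by
  have h1 : Tendsto (fun x : ℝ => Real.log (1 + x⁻¹)) atTop (𝓝 0) := by
    have hlog : ContinuousAt Real.log 1 := Real.continuousAt_log one_ne_zero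
    simpa [Function.comp_def] using hlog.tendsto.comp (tendsto_const_add_inv 1)
  have h2 : Tendsto (fun x : ℝ => 2 * (2 * x + 1)⁻¹) atTop (𝓝 0) := by
    have ha : Tendsto (fun x : ℝ => 2 * x + 1) atTop atTop :=
      tendsto_atTop_add_const_right _ 1 (tendsto_id.const_mul_atTop two_pos)
    simpa using (ha.inv_tendsto_atTop).const_mul 2
  have h := h1.sub h2
  rw [sub_zero] at h
  apply h.congr'
  filter_upwards [eventually_gt_atTop (0:ℝ)] with x hx
  unfold gapQ
  rw [show (1 : ℝ) + x⁻¹ = (x + 1) / x by field_simp,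
    Real.log_div (by linarith) hx.ne']

lemma gapQ_nonneg {x : ℝ} (hx : 0 < x) : 0 ≤ gapQ x := by
  apply le_of_tendsto gapQ_tendsto
  filter_upwards [eventually_ge_atTop x] with y hy
  exact gapQ_anti hx (lt_of_lt_of_le hx hy) hy

lemma gapPhi_hasDerivAt {x : ℝ} (hx : 0 < x) : HasDerivAt gapPhi (gapQ x) x := by
  have hx1 : x + 1 ≠ 0 := by linarith
  have hx2 : 2 * x + 1 ≠ 0 := by linarith
  have h1 : HasDerivAt (fun y : ℝ => (y + 1) * Real.log (y + 1))
      (Real.log (x + 1) + 1) x := by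
    simpa [Function.comp_def] using (Real.hasDerivAt_mul_log hx1).comp x ((hasDerivAt_id x).add_const 1)
  have h2 : HasDerivAt (fun y : ℝ => y * Real.log y) (Real.log x + 1) x :=
    Real.hasDerivAt_mul_log hx.ne'
  have h3 : HasDerivAt (fun y : ℝ => Real.log (2 * y + 1)) ((2 * x + 1)⁻¹ * 2) x :=
    by have := (Real.hasDerivAt_log hx2).comp x (hasDerivAt_lin x); exact this
  have h : HasDerivAt gapPhi _ x := (h1.sub h2).sub h3
  convert h using 1
  unfold gapQ
  ring

lemma gapPhi_continuousOn : ContinuousOn gapPhi (Ici (0 : ℝ)) := by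
  intro x hx
  have hx0 : (0:ℝ) ≤ x := hx
  have hg : Continuous g := by
    have h1 : Continuous fun y : ℝ => (y + 1) * Real.log (y + 1) :=
      Real.continuous_mul_log.comp (continuous_id.add continuous_const)
    exact h1.sub Real.continuous_mul_log
  have hlog : ContinuousAt (fun y : ℝ => Real.log (2 * y + 1)) x := by
    have h1 : ContinuousAt Real.log (2 * x + 1) :=
      Real.continuousAt_log (by linarith)
    have h2 : ContinuousAt (fun y : ℝ => 2 * y + 1) x := by fun_prop
    exact ContinuousAt.comp (g := Real.log) (f := fun y : ℝ => 2 * y + 1) h1 h2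
  exact (hg.continuousAt.sub hlog).continuousWithinAt

lemma gapPhi_mono : MonotoneOn gapPhi (Ici (0 : ℝ)) := by
  apply monotoneOn_of_deriv_nonneg (convex_Ici 0) gapPhi_continuousOn
  · intro x hx
    rw [interior_Ici] at hx
    exact (gapPhi_hasDerivAt hx).differentiableAt.differentiableWithinAt
  · intro x hx
    rw [interior_Ici] at hx
    rw [(gapPhi_hasDerivAt hx).deriv]
    exact gapQ_nonneg hx

lemma gapPhi_tendsto : Tendsto gapPhi atTop (𝓝 (1 - Real.log 2)) := by
  have h1 : Tendsto (fun x : ℝ => x * Real.log (1 + 1 / x)) atTop (𝓝 1) :=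
    Real.tendsto_mul_log_one_add_div_atTop 1
  have h2 : Tendsto (fun x : ℝ => Real.log ((x + 1) / (2 * x + 1))) atTop
      (𝓝 (Real.log (1 / 2))) := by
    have hfrac : Tendsto (fun x : ℝ => (x + 1) / (2 * x + 1)) atTop (𝓝 (1 / 2)) := by
      have := (tendsto_const_add_inv 1).div (tendsto_const_add_inv 2) two_ne_zero
      apply this.congr'
      filter_upwards [eventually_gt_atTop (0:ℝ)] with x hx
      simp only [Pi.div_apply]
      field_simp
    exact (Real.continuousAt_log (by norm_num)).tendsto.comp hfrac
  have h := h1.add h2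
  have hval : (1 : ℝ) + Real.log (1 / 2) = 1 - Real.log 2 := by
    rw [show (1:ℝ)/2 = 2⁻¹ by norm_num, Real.log_inv]; ring
  rw [hval] at h
  apply h.congr'
  filter_upwards [eventually_gt_atTop (0:ℝ)] with x hx
  have hx1 : (0:ℝ) < x + 1 := by linarith
  have hx2 : (0:ℝ) < 2 * x + 1 := by linarith
  unfold gapPhi g
  rw [show (1 : ℝ) + 1 / x = (x + 1) / x by field_simp,
    Real.log_div hx1.ne' hx.ne', Real.log_div hx1.ne' hx2.ne']
  ring

lemma gapPhi_le {x : ℝ} (hx : 0 ≤ x) : gapPhi x ≤ 1 - Real.log 2 := by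
  apply ge_of_tendsto gapPhi_tendsto
  filter_upwards [eventually_ge_atTop x] with y hy
  exact gapPhi_mono hx (le_trans hx hy) hy

lemma gapPhi_zero : gapPhi 0 = 0 := by
  simp [gapPhi, g]

/-- for `κ ≥ 1` and `E ≥ 0`, the gap
`f(κ,E) = g((κ−1/2)E + κ−1) − g(E/2) − ln(2κ−1)` satisfies
`0 ≤ f(κ,E) ≤ ln(e/2) = 1 − ln 2`. -/
theorem gap_bounds (κ E : ℝ) (hκ : 1 ≤ κ) (hE : 0 ≤ E) :
    0 ≤ g ((κ - 1 / 2) * E + κ - 1) - g (E / 2) - Real.log (2 * κ - 1) ∧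
    g ((κ - 1 / 2) * E + κ - 1) - g (E / 2) - Real.log (2 * κ - 1) ≤ 1 - Real.log 2 := by
  set X : ℝ := (κ - 1 / 2) * E + κ - 1 with hXdef
  set t : ℝ := E / 2 with htdef
  have ht : 0 ≤ t := by positivity
  have hX0 : 0 ≤ X := by rw [hXdef]; nlinarith
  have htX : t ≤ X := by rw [hXdef, htdef]; nlinarith
  have hlog : Real.log (2 * X + 1) - Real.log (2 * t + 1) = Real.log (2 * κ - 1) := by
    have h1 : 2 * X + 1 = (2 * κ - 1) * (E + 1) := by rw [hXdef]; ring
    have h2 : 2 * t + 1 = E + 1 := by rw [htdef]; ring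
    rw [h1, h2, Real.log_mul (by linarith) (by linarith)]
    ring
  have key : g X - g t - Real.log (2 * κ - 1) = gapPhi X - gapPhi t := by
    unfold gapPhi
    linarith [hlog]
  rw [key]
  constructor
  · have := gapPhi_mono (mem_Ici.mpr ht) (mem_Ici.mpr hX0) htX
    linarith
  · have h1 := gapPhi_le hX0
    have h2 := gapPhi_mono (mem_Ici.mpr le_rfl) (mem_Ici.mpr ht) ht
    rw [gapPhi_zero] at h2
    linarith
end

section
/- The function κ ↦ g(κ − 1) − ln(2κ − 1) is nondecreasing on [1,∞), its value at κ = 1 is 0, and its limit as κ → ∞ equals ln(e/2) = 1 − ln 2. -/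
open Filter Real Set

/-- `log(1+x) - log(1-x) ≥ 2x` on `[0,1)`. -/
lemma log_two_x_ineq : ∀ x ∈ Set.Ico (0:ℝ) 1,
    2 * x ≤ Real.log (1 + x) - Real.log (1 - x) := by
  have hmono : MonotoneOn
      (fun x : ℝ => Real.log (1 + x) - Real.log (1 - x) - 2 * x) (Set.Ico 0 1) := by
    apply monotoneOn_of_deriv_nonneg (convex_Ico 0 1)
    · apply ContinuousOn.sub
      apply ContinuousOn.sub
      · exact ContinuousOn.log (by fun_prop) (fun x hx => by
          have := hx.1; intro h; nlinarith)
      · exact ContinuousOn.log (by fun_prop) (fun x hx => by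
          have := hx.2; intro h; nlinarith)
      · fun_prop
    all_goals
      rw [interior_Ico]
      intro x hx
      obtain ⟨hx0, hx1⟩ := hx
      have h1 : (0:ℝ) < 1 + x := by linarith
      have h2 : (0:ℝ) < 1 - x := by linarith
      have d1 : HasDerivAt (fun y : ℝ => Real.log (1 + y)) (1 / (1 + x)) x := by
        simpa using ((hasDerivAt_id x).const_add 1).log h1.ne'
      have d2 : HasDerivAt (fun y : ℝ => Real.log (1 - y)) (-1 / (1 - x)) x := by
        have h : HasDerivAt (fun y : ℝ => 1 - y) (-1) x := by
          exact ((hasDerivAt_const x (1:ℝ)).sub (hasDerivAt_id x)).congr_deriv (by ring)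
        simpa using h.log h2.ne'
      have d3 : HasDerivAt
          (fun x : ℝ => Real.log (1 + x) - Real.log (1 - x) - 2 * x)
          (1 / (1 + x) - (-1 / (1 - x)) - 2) x := by
        exact ((d1.sub d2).sub ((hasDerivAt_id x).const_mul 2)).congr_deriv (by ring)
    · exact d3.differentiableAt.differentiableWithinAt
    · rw [d3.deriv]
      have key : 1 / (1 + x) - (-1 / (1 - x)) - 2
          = 2 * x ^ 2 / ((1 + x) * (1 - x)) := by
        field_simp
        ring
      rw [key]
      positivity
  intro x hx
  have h0 : (0:ℝ) ∈ Set.Ico (0:ℝ) 1 := by norm_num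
  have := hmono h0 hx hx.1
  simp at this
  linarith

/-- `log κ - log (κ-1) ≥ 2/(2κ-1)` for `κ > 1`. -/
lemma key_ineq (κ : ℝ) (hκ : 1 < κ) :
    2 / (2 * κ - 1) ≤ Real.log κ - Real.log (κ - 1) := by
  have hc : (0:ℝ) < 2 * κ - 1 := by linarith
  have hx0 : (0:ℝ) < 1 / (2 * κ - 1) := by positivity
  have hx1 : 1 / (2 * κ - 1) < 1 := by
    rw [div_lt_one hc]; linarith
  have h := log_two_x_ineq (1 / (2 * κ - 1)) ⟨hx0.le, hx1⟩
  have e1 : 1 + 1 / (2 * κ - 1) = κ * (2 / (2 * κ - 1)) := by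
    field_simp
    ring
  have e2 : 1 - 1 / (2 * κ - 1) = (κ - 1) * (2 / (2 * κ - 1)) := by
    field_simp
    ring
  have hκ0 : (0:ℝ) < κ := by linarith
  have hκ1 : (0:ℝ) < κ - 1 := by linarith
  have hcne : (2 / (2 * κ - 1) : ℝ) ≠ 0 := by positivity
  rw [e1, e2, Real.log_mul hκ0.ne' hcne, Real.log_mul hκ1.ne' hcne] at h
  have h2 : 2 * (1 / (2 * κ - 1)) = 2 / (2 * κ - 1) := by ring
  linarith

/-- `κ ↦ g(κ−1) − ln(2κ−1)` is nondecreasing on `[1,∞)`,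
vanishes at `κ = 1`, and tends to `ln(e/2) = 1 − ln 2` as `κ → ∞`. -/
theorem gap_at_zero_energy :
    MonotoneOn (fun κ : ℝ => g (κ - 1) - Real.log (2 * κ - 1)) (Set.Ici 1) ∧
    g ((1 : ℝ) - 1) - Real.log (2 * 1 - 1) = 0 ∧
    Filter.Tendsto (fun κ : ℝ => g (κ - 1) - Real.log (2 * κ - 1))
      Filter.atTop (nhds (1 - Real.log 2)) := by
  have hfun : (fun κ : ℝ => g (κ - 1) - Real.log (2 * κ - 1))
      = fun κ : ℝ => κ * Real.log κ - (κ - 1) * Real.log (κ - 1) - Real.log (2 * κ - 1) := by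
    funext κ
    simp only [g]
    ring_nf
  refine ⟨?_, by norm_num [g], ?_⟩
  · rw [hfun]
    apply monotoneOn_of_deriv_nonneg (convex_Ici 1)
    · apply ContinuousOn.sub
      apply ContinuousOn.sub
      · exact (Real.continuous_mul_log.comp continuous_id).continuousOn
      · exact (Real.continuous_mul_log.comp (continuous_id.sub continuous_const)).continuousOn
      · apply ContinuousOn.log (by fun_prop)
        intro x hx
        have h1 : (1:ℝ) ≤ x := hx
        intro h
        nlinarith
    all_goals
      rw [interior_Ici]
      intro κ hκ
      have hκ1 : (1:ℝ) < κ := hκ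
      have hκ0 : (0:ℝ) < κ := by linarith
      have hκm : (0:ℝ) < κ - 1 := by linarith
      have hc : (0:ℝ) < 2 * κ - 1 := by linarith
      have d1 : HasDerivAt (fun y : ℝ => y * Real.log y) (Real.log κ + 1) κ := by
        have := (hasDerivAt_id κ).mul (Real.hasDerivAt_log hκ0.ne')
        simp only [id_eq] at this
        have e : 1 * Real.log κ + κ * κ⁻¹ = Real.log κ + 1 := by
          field_simp
        rw [e] at this
        exact this
      have d2 : HasDerivAt (fun y : ℝ => (y - 1) * Real.log (y - 1))
          (Real.log (κ - 1) + 1) κ := by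
        have hs : HasDerivAt (fun y : ℝ => y - 1) 1 κ := (hasDerivAt_id κ).sub_const 1
        have := hs.mul (hs.log hκm.ne')
        have e : 1 * Real.log (κ - 1) + (κ - 1) * (1 / (κ - 1)) = Real.log (κ - 1) + 1 := by
          field_simp
        rw [e] at this
        exact this
      have d3 : HasDerivAt (fun y : ℝ => Real.log (2 * y - 1)) (2 / (2 * κ - 1)) κ := by
        have hs : HasDerivAt (fun y : ℝ => 2 * y - 1) 2 κ := by
          simpa using ((hasDerivAt_id κ).const_mul 2).sub_const 1
        simpa using hs.log hc.ne'
      have D : HasDerivAt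
          (fun κ : ℝ => κ * Real.log κ - (κ - 1) * Real.log (κ - 1) - Real.log (2 * κ - 1))
          ((Real.log κ + 1) - (Real.log (κ - 1) + 1) - 2 / (2 * κ - 1)) κ :=
        (d1.sub d2).sub d3
    · exact D.differentiableAt.differentiableWithinAt
    · rw [D.deriv]
      have := key_ineq κ hκ1
      linarith
  · rw [hfun]
    have hA : Filter.Tendsto (fun κ : ℝ => (κ - 1) * Real.log (1 + 1 / (κ - 1)))
        Filter.atTop (nhds 1) := by
      have h1 := Real.tendsto_mul_log_one_add_div_atTop 1
      have h2 : Filter.Tendsto (fun κ : ℝ => κ - 1) Filter.atTop Filter.atTop :=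
        tendsto_atTop_add_const_right _ (-1) tendsto_id
      exact h1.comp h2
    have hB : Filter.Tendsto (fun κ : ℝ => Real.log κ - Real.log (2 * κ - 1))
        Filter.atTop (nhds (-Real.log 2)) := by
      have h2 : Filter.Tendsto (fun κ : ℝ => 2 - κ⁻¹) Filter.atTop (nhds 2) := by
        have := (tendsto_const_nhds : Filter.Tendsto (fun _ : ℝ => (2:ℝ))
          Filter.atTop (nhds 2)).sub tendsto_inv_atTop_zero
        simpa using this
      have h3 : Filter.Tendsto (fun κ : ℝ => Real.log (2 - κ⁻¹)) Filter.atTop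
          (nhds (Real.log 2)) := by
        have hcont : ContinuousAt Real.log 2 := Real.continuousAt_log (by norm_num)
        exact (hcont.tendsto.comp h2)
      have h4 := h3.neg
      apply h4.congr'
      filter_upwards [eventually_gt_atTop (1:ℝ)] with κ hκ
      have hκ0 : (0:ℝ) < κ := by linarith
      have hc : (0:ℝ) < 2 * κ - 1 := by linarith
      have e : 2 - κ⁻¹ = (2 * κ - 1) / κ := by
        field_simp
      rw [e, Real.log_div hc.ne' hκ0.ne']
      ring
    have hsum := hA.add hB
    have heq : (fun κ : ℝ => (κ - 1) * Real.log (1 + 1 / (κ - 1))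
          + (Real.log κ - Real.log (2 * κ - 1)))
        =ᶠ[Filter.atTop] (fun κ : ℝ =>
          κ * Real.log κ - (κ - 1) * Real.log (κ - 1) - Real.log (2 * κ - 1)) := by
      filter_upwards [eventually_gt_atTop (1:ℝ)] with κ hκ
      have hκ0 : (0:ℝ) < κ := by linarith
      have hκm : (0:ℝ) < κ - 1 := by linarith
      have e : 1 + 1 / (κ - 1) = κ / (κ - 1) := by
        field_simp
        ring
      rw [e, Real.log_div hκ0.ne' hκm.ne']
      ring
    have : (1 : ℝ) + -Real.log 2 = 1 - Real.log 2 := by ring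
    rw [← this]
    exact hsum.congr' heq
end
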